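/- (Coefficient recursion for the (−m)-loop ratio series.) Fix m ∈ ℕ. In K[[x]] with K = ℚ(q), let A = Σ_{d≥0} (−q)^{−m d²} q^{(m+1)d} x^d/(q²;q²)_d and B = Σ_{d≥0} (−q)^{−m d²} q^{(m+3)d} x^d/(q²;q²)_d; A is a unit and Y = B·A^{−1} = Σ_{n≥0} Y_n x^n with Y_n ∈ K. Then Y_0 = 1, Y_1 = (−1)^{m+1} q, and for every n ≥ 2: Y_n = −Σ_{a+b=n, a≥1, b≥1} Y_a · Σ_{k_1+…+k_m=b, k_i ∈ ℕ} ∏_{i=1}^{m} q^{−2 i k_i} Y_{k_i}. -/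

import Mathlib

noncomputable section

/-- The base field `K = ℚ(q)`. -/
abbrev K : Type := RatFunc ℚ

/-- The variable `q` of `K = ℚ(q)`. -/
def qq : K := RatFunc.X

/-- The finite q-Pochhammer symbol `(α; q²)_n = ∏_{k=0}^{n-1} (1 - α q^{2k})`. -/
def qPoch (α : K) (n : ℕ) : K := ∏ k ∈ Finset.range n, (1 - α * qq ^ (2 * k))

/-- The quadratic form `dᵀ C d` of an integer matrix on a dimension vector. -/
def quadForm {N : ℕ} (C : Matrix (Fin N) (Fin N) ℤ) (d : Fin N → ℕ) : ℤ :=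
  ∑ i, ∑ j, C i j * (d i : ℤ) * (d j : ℤ)

/-- The coefficient of `x^d` in the motivic generating series of the extended
symmetric quiver with adjacency matrix `C`: `(-q)^{dᵀCd} / ∏ᵢ (q²;q²)_{dᵢ}`. -/
def Pcoeff {N : ℕ} (C : Matrix (Fin N) (Fin N) ℤ) (d : Fin N → ℕ) : K :=
  (-qq) ^ quadForm C d / ∏ i, qPoch (qq ^ 2) (d i)

lemma qq_ne_zero : qq ≠ 0 := RatFunc.X_ne_zero

lemma one_sub_qq_pow_ne (k : ℕ) : (1 : K) - qq ^ (k + 1) ≠ 0 := by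
  intro h
  rw [sub_eq_zero] at h
  have h2 : (Polynomial.X ^ (k+1) : Polynomial ℚ) = 1 := by
    apply IsFractionRing.injective (Polynomial ℚ) K
    simpa [qq, RatFunc.algebraMap_X] using h.symm
  have := congrArg (Polynomial.eval 0) h2
  simp at this

lemma qPoch_ne_zero (d : ℕ) : qPoch (qq ^ 2) d ≠ 0 := by
  rw [qPoch, Finset.prod_ne_zero_iff]
  intro k _
  have : qq ^ 2 * qq ^ (2 * k) = qq ^ (2 * k + 1 + 1) := by ring
  rw [this]
  exact one_sub_qq_pow_ne _

lemma qPoch_succ (d : ℕ) :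
    qPoch (qq ^ 2) (d + 1) = qPoch (qq ^ 2) d * (1 - qq ^ (2 * d + 2)) := by
  rw [qPoch, Finset.prod_range_succ, qPoch]
  congr 2
  ring

lemma neg_one_pow_mul_odd (m d : ℕ) : ((-1 : K)) ^ (m * (2 * d + 1)) = (-1) ^ m := by
  rcases Nat.even_or_odd m with h | h
  · rw [(h.mul_right _).neg_one_pow, h.neg_one_pow]
  · rw [(h.mul (odd_two_mul_add_one d)).neg_one_pow, h.neg_one_pow]

lemma inv_neg_one_pow (e : ℕ) : ((-1 : K) ^ e)⁻¹ = (-1) ^ e := by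
  rw [← inv_pow, inv_neg, inv_one]

lemma negq_zpow (m e : ℕ) : (-qq) ^ (-(m : ℤ) * (e : ℤ) ^ 2) = ((-1:K) ^ (m * e^2)) * (qq ^ (m * e^2))⁻¹ := by
  rw [show (-(m : ℤ) * (e : ℤ) ^ 2) = -((m * e^2 : ℕ) : ℤ) by push_cast; ring,
    zpow_neg, zpow_natCast, neg_pow, mul_inv, inv_neg_one_pow]

lemma key (m d : ℕ) :
    (-qq) ^ (-(m : ℤ) * ((d + 1 : ℕ) : ℤ) ^ 2) * qq ^ ((m + 3) * (d + 1)) / qPoch (qq ^ 2) (d + 1)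
      = (-qq) ^ (-(m : ℤ) * ((d + 1 : ℕ) : ℤ) ^ 2) * qq ^ ((m + 1) * (d + 1)) / qPoch (qq ^ 2) (d + 1)
        + ((-1) ^ (m + 1) * qq) * ((qq⁻¹) ^ (2 * m)) ^ d *
          ((-qq) ^ (-(m : ℤ) * (d : ℤ) ^ 2) * qq ^ ((m + 1) * d) / qPoch (qq ^ 2) d) := by
  rw [negq_zpow, negq_zpow, qPoch_succ]
  have hd : m * (d + 1) ^ 2 = m * d ^ 2 + m * (2 * d + 1) := by ring
  rw [hd, pow_add, pow_add, neg_one_pow_mul_odd, mul_inv]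
  generalize (-1 : K) ^ (m * d ^ 2) = s
  generalize hts : (-1 : K) ^ m = t
  have ht1 : (-1 : K) ^ (m + 1) = -t := by rw [pow_succ, hts]; ring
  rw [ht1]
  have h1 : (1 : K) - qq ^ (2 * d + 2) ≠ 0 := one_sub_qq_pow_ne (2 * d + 1)
  simp only [← pow_mul, inv_pow]
  field_simp [qq_ne_zero, qPoch_ne_zero d]
  ring

open PowerSeries in
lemma coeff_prod_fin {m n : ℕ} (f : Fin m → PowerSeries K) :
    PowerSeries.coeff n (∏ i, f i)
      = ∑ k ∈ Finset.Nat.antidiagonalTuple m n, ∏ i, PowerSeries.coeff (k i) (f i) := by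
  rw [PowerSeries.coeff_prod]
  refine Finset.sum_nbij' (fun l => ⇑l) (fun k => Finsupp.equivFunOnFinite.symm k)
    ?_ ?_ ?_ ?_ ?_
  · intro l hl
    rw [Finset.mem_finsuppAntidiag] at hl
    rw [Finset.Nat.mem_antidiagonalTuple]
    exact hl.1
  · intro k hk
    rw [Finset.Nat.mem_antidiagonalTuple] at hk
    rw [Finset.mem_finsuppAntidiag]
    exact ⟨by simpa using hk, Finset.subset_univ _⟩
  · intro l _; exact Finsupp.equivFunOnFinite.symm_apply_apply l
  · intro k _; rfl
  · intro l _; rfl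


open PowerSeries in
/-- **Coefficient recursion (A.5) for the `(−m)`-loop ratio series:** with
`A = P_{−m}(q^{m+1}x)`, `B = P_{−m}(q^{m+3}x)` and `Y = B·A⁻¹ = Σ Yₙ xⁿ`, one has
`Y₀ = 1`, `Y₁ = (−1)^{m+1} q`, and for `n ≥ 2`
`Yₙ = −Σ_{a+b=n, a,b≥1} Yₐ Σ_{k₁+⋯+k_m=b} ∏ᵢ q^{−2ikᵢ} Y_{kᵢ}`. -/
theorem statement17 (m : ℕ) :
    letI A : PowerSeries K := PowerSeries.mk fun d : ℕ =>
      (-qq) ^ (-(m : ℤ) * (d : ℤ) ^ 2) * qq ^ ((m + 1) * d) / qPoch (qq ^ 2) d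
    letI B : PowerSeries K := PowerSeries.mk fun d : ℕ =>
      (-qq) ^ (-(m : ℤ) * (d : ℤ) ^ 2) * qq ^ ((m + 3) * d) / qPoch (qq ^ 2) d
    letI Y : PowerSeries K := B * A⁻¹
    PowerSeries.coeff 0 Y = 1 ∧
    PowerSeries.coeff 1 Y = (-1) ^ (m + 1) * qq ∧
    ∀ n : ℕ, 2 ≤ n →
      PowerSeries.coeff n Y =
        -∑ p ∈ (Finset.HasAntidiagonal.antidiagonal n).filter (fun p => 1 ≤ p.1 ∧ 1 ≤ p.2),
          PowerSeries.coeff p.1 Y *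
            ∑ k ∈ Finset.Nat.antidiagonalTuple m p.2,
              ∏ i : Fin m,
                qq ^ (-2 * ((i : ℕ) + 1 : ℤ) * (k i : ℤ)) * PowerSeries.coeff (k i) Y := by
  set A : PowerSeries K := PowerSeries.mk (fun d : ℕ =>
      (-qq) ^ (-(m : ℤ) * (d : ℤ) ^ 2) * qq ^ ((m + 1) * d) / qPoch (qq ^ 2) d) with hAdef
  set B : PowerSeries K := PowerSeries.mk (fun d : ℕ =>
      (-qq) ^ (-(m : ℤ) * (d : ℤ) ^ 2) * qq ^ ((m + 3) * d) / qPoch (qq ^ 2) d) with hBdef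
  set Y : PowerSeries K := B * A⁻¹ with hYdef
  have hA0 : constantCoeff A = 1 := by
    simp [A, qPoch, ← coeff_zero_eq_constantCoeff]
  have hB0 : constantCoeff B = 1 := by
    simp [B, qPoch, ← coeff_zero_eq_constantCoeff]
  have hAu : A * A⁻¹ = 1 := PowerSeries.mul_inv_cancel _ (by rw [hA0]; exact one_ne_zero)
  have hY0 : coeff 0 Y = 1 := by
    have : constantCoeff Y = 1 := by
      rw [hYdef, map_mul, hB0, PowerSeries.constantCoeff_inv, hA0]
      simp
    rwa [coeff_zero_eq_constantCoeff]
  have hYA : Y * A = B := by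
    rw [hYdef, mul_assoc, mul_comm A⁻¹ A, hAu, mul_one]
  have hB : B = rescale (qq ^ 2) A := by
    rw [hAdef, hBdef]
    ext d
    rw [coeff_rescale, PowerSeries.coeff_mk, PowerSeries.coeff_mk]
    have h2 : (qq ^ 2) ^ d * qq ^ ((m + 1) * d) = qq ^ ((m + 3) * d) := by
      rw [← pow_mul, ← pow_add]
      congr 1
      ring
    rw [← h2]
    ring
  have hAB : B = A + ((-1 : K) ^ (m + 1) * qq) • (X * rescale ((qq⁻¹) ^ (2 * m)) A) := by
    ext d
    rw [map_add, PowerSeries.coeff_smul, smul_eq_mul]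
    cases d with
    | zero =>
      rw [coeff_zero_X_mul, mul_zero, add_zero]
      simp [A, B]
    | succ d =>
      rw [coeff_succ_X_mul, coeff_rescale]
      show (coeff (d+1)) B = (coeff (d+1)) A + _
      rw [PowerSeries.coeff_mk, PowerSeries.coeff_mk, PowerSeries.coeff_mk]
      rw [key m d]
      ring
  -- telescoping
  set g : ℕ → PowerSeries K := fun j => rescale ((qq⁻¹) ^ (2 * j)) A with hg
  have hg0 : g 0 = A := by
    simp only [hg, mul_zero, pow_zero, rescale_one, RingHom.id_apply]
  have hstep : ∀ j : ℕ, rescale ((qq⁻¹) ^ (2 * (j + 1))) Y * g (j + 1) = g j := by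
    intro j
    have h1 := congrArg (rescale ((qq⁻¹) ^ (2 * (j + 1)))) hYA
    rw [map_mul] at h1
    rw [hg]
    rw [show (rescale ((qq⁻¹) ^ (2 * (j + 1)))) A = g (j+1) from rfl] at h1
    rw [h1, hB, rescale_rescale]
    have h2 : qq ^ 2 * (qq⁻¹) ^ 2 = 1 := by
      rw [← mul_pow, mul_inv_cancel₀ qq_ne_zero, one_pow]
    have harg : qq ^ 2 * (qq⁻¹) ^ (2 * (j + 1)) = (qq⁻¹) ^ (2 * j) := by
      calc qq ^ 2 * (qq⁻¹) ^ (2 * (j + 1))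
          = (qq ^ 2 * (qq⁻¹) ^ 2) * (qq⁻¹) ^ (2 * j) := by
            rw [show 2 * (j + 1) = 2 * j + 2 by ring, pow_add]; ring
        _ = (qq⁻¹) ^ (2 * j) := by rw [h2, one_mul]
    rw [harg]
  have htel : ∀ j : ℕ,
      (∏ i ∈ Finset.range j, rescale ((qq⁻¹) ^ (2 * (i + 1))) Y) * g j = A := by
    intro j
    induction j with
    | zero => simpa using hg0
    | succ j ih =>
      rw [Finset.prod_range_succ, mul_assoc, hstep j, ih]
  set Z : PowerSeries K := ∏ i : Fin m, rescale ((qq⁻¹) ^ (2 * ((i : ℕ) + 1))) Y with hZdef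
  have hZA : Z * g m = A := by
    rw [hZdef, Fin.prod_univ_eq_prod_range (fun i => rescale ((qq⁻¹) ^ (2 * (i + 1))) Y) m]
    exact htel m
  have hgm0 : constantCoeff (g m) = 1 := by
    rw [hg, ← coeff_zero_eq_constantCoeff, coeff_rescale, pow_zero, one_mul,
      coeff_zero_eq_constantCoeff, hA0]
  have hgmne : g m ≠ 0 := by
    intro h; rw [h, map_zero] at hgm0; exact one_ne_zero hgm0.symm
  have hmain : (Y - 1) * Z = ((-1 : K) ^ (m + 1) * qq) • X := by
    apply mul_right_cancel₀ hgmne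
    have e1 : (Y - 1) * Z * g m = Y * (Z * g m) - Z * g m := by ring
    rw [e1, hZA, hYA, hAB]
    rw [smul_eq_C_mul, smul_eq_C_mul]
    ring
  have hZ0 : constantCoeff Z = 1 := by
    rw [hZdef, map_prod]
    have : ∀ i : Fin m, constantCoeff (rescale ((qq⁻¹) ^ (2 * ((i : ℕ) + 1))) Y) = 1 := by
      intro i
      rw [← coeff_zero_eq_constantCoeff, coeff_rescale, pow_zero, one_mul, hY0]
    exact Finset.prod_eq_one fun i _ => this i
  have hZc0 : coeff 0 Z = 1 := by rw [coeff_zero_eq_constantCoeff, hZ0]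
  have hY1 : coeff 1 Y = (-1) ^ (m + 1) * qq := by
    have h1 := congrArg (coeff 1) hmain
    rw [PowerSeries.coeff_smul, smul_eq_mul, PowerSeries.coeff_one_X, mul_one,
      PowerSeries.coeff_mul, Finset.Nat.sum_antidiagonal_succ,
      Finset.Nat.antidiagonal_zero, Finset.sum_singleton] at h1
    norm_num [map_sub, PowerSeries.coeff_one, hY0, hZc0] at h1
    exact h1
  have hZcoeff : ∀ b : ℕ, coeff b Z
      = ∑ k ∈ Finset.Nat.antidiagonalTuple m b, ∏ i : Fin m,
          qq ^ (-2 * ((i : ℕ) + 1 : ℤ) * (k i : ℤ)) * coeff (k i) Y := by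
    intro b
    rw [hZdef, coeff_prod_fin]
    refine Finset.sum_congr rfl fun k _ => Finset.prod_congr rfl fun i _ => ?_
    rw [coeff_rescale]
    congr 1
    rw [show (-2 * ((i : ℕ) + 1 : ℤ) * (k i : ℤ)) = -((2 * ((i : ℕ) + 1) * (k i) : ℕ) : ℤ) by
      push_cast; ring, zpow_neg, zpow_natCast, ← inv_pow, ← pow_mul]
  refine ⟨hY0, hY1, ?_⟩
  intro n hn
  have h1 := congrArg (coeff n) hmain
  rw [PowerSeries.coeff_smul, smul_eq_mul, PowerSeries.coeff_X, if_neg (by omega), mul_zero,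
    sub_mul, one_mul, map_sub, PowerSeries.coeff_mul, sub_eq_zero] at h1
  rw [← Finset.sum_filter_add_sum_filter_not (Finset.HasAntidiagonal.antidiagonal n)
    (fun p => 1 ≤ p.1 ∧ 1 ≤ p.2)] at h1
  have hset : (Finset.HasAntidiagonal.antidiagonal n).filter (fun p => ¬(1 ≤ p.1 ∧ 1 ≤ p.2))
      = {((0 : ℕ), n), (n, (0 : ℕ))} := by
    ext ⟨a, b⟩
    simp only [Finset.mem_filter, Finset.HasAntidiagonal.mem_antidiagonal, Finset.mem_insert,
      Finset.mem_singleton, Prod.mk.injEq]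
    omega
  have hne : ((0 : ℕ), n) ≠ (n, (0 : ℕ)) := by
    simp only [ne_eq, Prod.mk.injEq]
    omega
  rw [hset, Finset.sum_pair hne, hY0, one_mul, hZc0, mul_one] at h1
  have h2 : coeff n Y
      = -∑ p ∈ (Finset.HasAntidiagonal.antidiagonal n).filter (fun p => 1 ≤ p.1 ∧ 1 ≤ p.2),
          coeff p.1 Y * coeff p.2 Z := by linear_combination h1
  rw [h2]
  congr 1
  exact Finset.sum_congr rfl fun p _ => by rw [hZcoeff p.2]
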